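/- Let p < 0 and let S ⊂ ℝⁿ be a regular k-point set (k ≥ 2 points with all pairwise distances equal to d > 0). Then cap_p(S) = ((k−1)/k)^{−1/p} · d, and the unique p-equilibrium measure on S is the uniform probability measure assigning mass 1/k to each point of S. -/

import Mathlib

open MeasureTheory Metric Set ENNReal Filter

noncomputable section

namespace Riesz

variable {E : Type*} [MeasurableSpace E] [PseudoMetricSpace E]

/-- Borel probability measures supported on `K` (i.e. giving full mass to `K`). -/
def probOn (K : Set E) : Set (Measure E) :=
  {μ | IsProbabilityMeasure μ ∧ μ Kᶜ = 0}

/-- The Riesz `p`-energy `∬ |x-y|^{-p} dμ dμ` of a measure `μ`, valued in `ℝ≥0∞`.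
(The kernel `(dist x y)^{-p}`, computed in `ℝ≥0∞`, is `∞` on the diagonal when `p > 0`
and `0` on the diagonal when `p < 0`.) -/
def energyOf (p : ℝ) (μ : Measure E) : ℝ≥0∞ :=
  ∫⁻ z : E × E, (ENNReal.ofReal (dist z.1 z.2)) ^ (-p) ∂(μ.prod μ)

/-- The Riesz `p`-energy of a set `K`, for `p ≠ 0`: a supremum over probability measures
on `K` when `p < 0`, an infimum when `p > 0`.  (For `K = ∅` this gives `0` when `p < 0`
and `∞` when `p > 0`.) -/
def energy (p : ℝ) (K : Set E) : ℝ≥0∞ :=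
  if p < 0 then ⨆ μ ∈ probOn K, energyOf p μ
  else ⨅ μ ∈ probOn K, energyOf p μ

/-- The logarithmic energy `∬ log (1/|x-y|) dμ dμ` of a measure, as an extended real:
the positive part (with value `∞` on the diagonal) minus the negative part. -/
def logEnergyOf (μ : Measure E) : EReal :=
  ((∫⁻ z : E × E, (if dist z.1 z.2 = 0 then ⊤ else
      ENNReal.ofReal (Real.log (1 / dist z.1 z.2))) ∂(μ.prod μ) : ℝ≥0∞) : EReal)
  - ((∫⁻ z : E × E, ENNReal.ofReal (Real.log (dist z.1 z.2)) ∂(μ.prod μ) : ℝ≥0∞) : EReal)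

/-- The logarithmic energy of a set `K`: infimum over probability measures on `K`. -/
def logEnergy (K : Set E) : EReal :=
  ⨅ μ ∈ probOn K, logEnergyOf μ

/-- The Riesz `p`-capacity of a set: `V_p(K)^{-1/p}` for `p ≠ 0`, and the logarithmic
capacity `exp(-V_log(K))` for `p = 0`. -/
def cap (p : ℝ) (K : Set E) : ℝ :=
  if p = 0 then
    (if logEnergy K = ⊤ then 0 else Real.exp (-(logEnergy K).toReal))
  else ((energy p K).toReal) ^ (-1 / p)

/-- `μ` is a `p`-equilibrium measure of `K`: a probability measure on `K` whose
`p`-energy attains the optimal `p`-energy of `K`. -/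
def IsEquilibrium (p : ℝ) (K : Set E) (μ : Measure E) : Prop :=
  μ ∈ probOn K ∧ energyOf p μ = energy p K

/-- A set `Z` has inner `p`-capacity zero: every compact subset has `p`-capacity zero. -/
def InnerCapZero (p : ℝ) (Z : Set E) : Prop :=
  ∀ Z' ⊆ Z, IsCompact Z' → cap p Z' = 0

end Riesz

end

noncomputable section Aux

set_option linter.unusedSectionVars false

namespace Statement17Aux

open MeasureTheory ENNReal

variable {E : Type*} [MeasurableSpace E] [MeasurableSingletonClass E]

lemma measure_finset (s : Finset E) (μ : Measure E) : μ ↑s = ∑ x ∈ s, μ {x} := by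
  rw [show (↑s : Set E) = ⋃ x ∈ s, ({x} : Set E) by ext x; simp]
  exact measure_biUnion_finset
    (by intro x _ y hy hxy; simpa [Set.disjoint_singleton] using hxy)
    (fun b _ => measurableSet_singleton b)

/-- A measure giving no mass outside a finite set is the weighted sum of diracs. -/
lemma decompose (S : Finset E) (μ : Measure E) (h : μ (↑S : Set E)ᶜ = 0) :
    μ = ∑ x ∈ S, μ {x} • Measure.dirac x := by
  classical
  ext A hA
  rw [Measure.finset_sum_apply]
  have h1 : μ A = μ (A ∩ ↑S) := by
    have h2 := measure_inter_add_diff (μ := μ) A (S.finite_toSet.measurableSet)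
    have h3 : μ (A \ ↑S) = 0 :=
      measure_mono_null (fun x hx => hx.2) h
    rw [← h2, h3, add_zero]
  have h4 : (A ∩ ↑S) = ↑(S.filter (· ∈ A)) := by
    ext x; simp [and_comm]
  rw [h1, h4, measure_finset, Finset.sum_filter]
  refine Finset.sum_congr rfl fun x hx => ?_
  rw [Measure.smul_apply, Measure.dirac_apply' x hA, smul_eq_mul]
  by_cases hxA : x ∈ A <;> simp [hxA, Set.indicator_apply]

variable [PseudoMetricSpace E] [OpensMeasurableSpace E] [SecondCountableTopology E]

/-- Energy of a finite atomic measure. -/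
lemma energy_atoms (p : ℝ) (S : Finset E) (c : E → ℝ≥0∞) (μ : Measure E) [SFinite μ]
    (hμ : μ = ∑ x ∈ S, c x • Measure.dirac x) :
    Riesz.energyOf p μ =
      ∑ x ∈ S, c x * ∑ y ∈ S, c y * (ENNReal.ofReal (dist x y)) ^ (-p) := by
  have hm : Measurable (fun z : E × E => (ENNReal.ofReal (dist z.1 z.2)) ^ (-p)) := by
    fun_prop
  rw [Riesz.energyOf, MeasureTheory.lintegral_prod _ hm.aemeasurable, hμ,
    lintegral_finset_sum_measure]
  refine Finset.sum_congr rfl fun x hx => ?_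
  rw [lintegral_smul_measure, lintegral_dirac, lintegral_finset_sum_measure]
  congr 1
  refine Finset.sum_congr rfl fun y hy => ?_
  rw [lintegral_smul_measure, lintegral_dirac, smul_eq_mul]

/-- Key algebraic identity in `ℝ≥0∞`. -/
lemma key_identity [DecidableEq E] (S : Finset E) (c : E → ℝ≥0∞) (D : ℝ≥0∞)
    (K : E → E → ℝ≥0∞) (hc : ∑ x ∈ S, c x = 1)
    (hK : ∀ x ∈ S, ∀ y ∈ S, K x y = if x = y then 0 else D) :
    (∑ x ∈ S, c x * ∑ y ∈ S, c y * K x y) + D * ∑ x ∈ S, (c x) ^ 2 = D := by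
  rw [Finset.mul_sum, ← Finset.sum_add_distrib]
  have hterm : ∀ x ∈ S, c x * (∑ y ∈ S, c y * K x y) + D * (c x) ^ 2 = c x * D := by
    intro x hx
    have hinner : ∑ y ∈ S, c y * K x y = ∑ y ∈ S.erase x, c y * D := by
      rw [← Finset.sum_erase_add S _ hx, hK x hx x hx, if_pos rfl, mul_zero, add_zero]
      exact Finset.sum_congr rfl fun y hy => by
        rw [hK x hx y (Finset.mem_of_mem_erase hy), if_neg (Finset.ne_of_mem_erase hy).symm]
    have hfull : ∑ y ∈ S.erase x, c y * D + c x * D = ∑ y ∈ S, c y * D :=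
      Finset.sum_erase_add S _ hx
    have hsum : ∑ y ∈ S, c y * D = D := by
      rw [← Finset.sum_mul, hc, one_mul]
    calc c x * (∑ y ∈ S, c y * K x y) + D * (c x) ^ 2
        = c x * ((∑ y ∈ S.erase x, c y * D) + c x * D) := by
          rw [hinner]; ring
      _ = c x * D := by rw [hfull, hsum]
  rw [Finset.sum_congr rfl hterm, ← Finset.sum_mul, hc, one_mul]

/-- Sum of squares identity in `ℝ`. -/
lemma sumsq {α : Type*} (S : Finset α) (w : α → ℝ) (hS : S.Nonempty)
    (h1 : ∑ x ∈ S, w x = 1) :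
    ∑ x ∈ S, (w x) ^ 2
      = 1 / S.card + ∑ x ∈ S, (w x - 1 / S.card) ^ 2 := by
  have hk : (S.card : ℝ) ≠ 0 := Nat.cast_ne_zero.mpr (Finset.card_ne_zero_of_mem hS.choose_spec)
  have : ∑ x ∈ S, (w x - 1 / S.card) ^ 2
      = ∑ x ∈ S, ((w x) ^ 2 - 2 * (1 / S.card) * w x + (1 / S.card) ^ 2) :=
    Finset.sum_congr rfl fun x _ => by ring
  rw [this, Finset.sum_add_distrib, Finset.sum_sub_distrib, ← Finset.mul_sum, h1,
    Finset.sum_const, nsmul_eq_mul]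
  field_simp
  ring

lemma cancel_right {a b c : ℝ≥0∞} (hc : c ≠ ⊤) (h : a + c = b + c) : a = b :=
  (ENNReal.add_right_inj hc).mp (by rwa [add_comm c a, add_comm c b])

lemma mul_cancel_left {a b c : ℝ≥0∞} (ha0 : a ≠ 0) (hat : a ≠ ⊤) (h : a * b = a * c) : b = c := by
  have h2 := congrArg (a⁻¹ * ·) h
  simpa [← mul_assoc, ENNReal.inv_mul_cancel ha0 hat] using h2

end Statement17Aux

end Aux

set_option maxHeartbeats 1000000 in
/-- Capacity and equilibrium measure of a regular `k`-point set: for `p < 0` and a set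
`S` of `k ≥ 2` points in `ℝⁿ` with all pairwise distances equal to `d > 0`,
`cap_p(S) = ((k-1)/k)^(-1/p)·d`, and the `p`-equilibrium measures of `S` are exactly
the uniform probability measure giving mass `1/k` to each point. -/
theorem statement17 (n : ℕ) (p d : ℝ) (hp : p < 0) (hd : 0 < d)
    (S : Finset (EuclideanSpace ℝ (Fin n))) (hk : 2 ≤ S.card)
    (hdist : ∀ x ∈ S, ∀ y ∈ S, x ≠ y → dist x y = d) :
    Riesz.cap p (↑S : Set (EuclideanSpace ℝ (Fin n))) =
      (((S.card : ℝ) - 1) / (S.card : ℝ)) ^ (-1 / p) * d ∧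
    ∀ μ : Measure (EuclideanSpace ℝ (Fin n)),
      Riesz.IsEquilibrium p (↑S : Set (EuclideanSpace ℝ (Fin n))) μ ↔
        μ = ((S.card : ℝ≥0∞))⁻¹ • ∑ x ∈ S, Measure.dirac x := by
  classical
  open Statement17Aux in
  have hS' : True := trivial
  have hS : S.Nonempty := Finset.card_pos.mp (by omega)
  have hkR : (2:ℝ) ≤ S.card := by exact_mod_cast hk
  have hk0 : (S.card : ℝ) ≠ 0 := by positivity
  have hkE0 : (S.card : ℝ≥0∞) ≠ 0 := by
    simp only [ne_eq, Nat.cast_eq_zero]; omega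
  have hkEt : (S.card : ℝ≥0∞) ≠ ⊤ := ENNReal.natCast_ne_top _
  have hkinvt : ((S.card : ℝ≥0∞))⁻¹ ≠ ⊤ := ENNReal.inv_ne_top.mpr hkE0
  have hnp : 0 < -p := by linarith
  set D : ℝ≥0∞ := ENNReal.ofReal d ^ (-p) with hDdef
  have hD0 : D ≠ 0 := (ENNReal.rpow_pos (by simpa using hd) ENNReal.ofReal_ne_top).ne'
  have hDt : D ≠ ⊤ := ENNReal.rpow_ne_top_of_nonneg hnp.le ENNReal.ofReal_ne_top
  set K : EuclideanSpace ℝ (Fin n) → EuclideanSpace ℝ (Fin n) → ℝ≥0∞ := fun x y => (ENNReal.ofReal (dist x y)) ^ (-p) with hKdef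
  have hK : ∀ x ∈ S, ∀ y ∈ S, K x y = if x = y then 0 else D := by
    intro x hx y hy
    by_cases h : x = y
    · subst h; simp [hKdef, ENNReal.zero_rpow_of_pos hnp]
    · rw [hKdef]; simp only [if_neg h]; rw [hdist x hx y hy h]
  set c₀ : ℝ := ((S.card : ℝ) - 1) / S.card with hc₀def
  have hc₀ : 0 < c₀ := by
    apply div_pos <;> linarith
  set T : ℝ≥0∞ := D * ENNReal.ofReal c₀ with hTdef
  have hTt : T ≠ ⊤ := ENNReal.mul_ne_top hDt ENNReal.ofReal_ne_top
  have hkinv : ((S.card : ℝ≥0∞))⁻¹ = ENNReal.ofReal (1 / (S.card : ℝ)) := by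
    rw [one_div, ENNReal.ofReal_inv_of_pos (by positivity), ENNReal.ofReal_natCast]
  have hDkt : D * ((S.card : ℝ≥0∞))⁻¹ ≠ ⊤ := ENNReal.mul_ne_top hDt hkinvt
  have hTD : T + D * ((S.card : ℝ≥0∞))⁻¹ = D := by
    rw [hkinv, hTdef, ← mul_add,
      ← ENNReal.ofReal_add (le_of_lt hc₀) (by positivity)]
    have h1 : c₀ + 1 / (S.card : ℝ) = 1 := by rw [hc₀def]; field_simp; ring
    rw [h1, ENNReal.ofReal_one, mul_one]
  -- the per-measure identity
  have main : ∀ μ : Measure (EuclideanSpace ℝ (Fin n)), μ ∈ Riesz.probOn (↑S : Set (EuclideanSpace ℝ (Fin n))) →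
      (∑ x ∈ S, μ {x} = 1) ∧
      Riesz.energyOf p μ + D * ∑ x ∈ S, (μ {x}) ^ 2 = D := by
    intro μ hμ
    haveI : IsProbabilityMeasure μ := hμ.1
    have hdec := decompose S μ hμ.2
    have hcsum : ∑ x ∈ S, μ {x} = 1 := by
      rw [← measure_finset S μ]
      have h2 := measure_add_measure_compl (μ := μ) S.finite_toSet.measurableSet
      rw [hμ.2, add_zero] at h2
      rw [h2, measure_univ]
    refine ⟨hcsum, ?_⟩
    rw [energy_atoms p S (fun x => μ {x}) μ hdec]
    exact key_identity S (fun x => μ {x}) D K hcsum hK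
  -- sums of squares are finite
  have sqfin : ∀ μ : Measure (EuclideanSpace ℝ (Fin n)), μ ∈ Riesz.probOn (↑S : Set (EuclideanSpace ℝ (Fin n))) →
      ∑ x ∈ S, (μ {x}) ^ 2 ≠ ⊤ := by
    intro μ hμ
    haveI : IsProbabilityMeasure μ := hμ.1
    exact ENNReal.sum_ne_top.mpr fun x _ =>
      ENNReal.pow_ne_top (measure_ne_top μ _)
  -- the sum-of-squares bound and equality case
  have sqb : ∀ μ : Measure (EuclideanSpace ℝ (Fin n)), μ ∈ Riesz.probOn (↑S : Set (EuclideanSpace ℝ (Fin n))) →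
      ((S.card : ℝ≥0∞))⁻¹ ≤ ∑ x ∈ S, (μ {x}) ^ 2 ∧
      (∑ x ∈ S, (μ {x}) ^ 2 = ((S.card : ℝ≥0∞))⁻¹ →
        ∀ x ∈ S, μ {x} = ((S.card : ℝ≥0∞))⁻¹) := by
    intro μ hμ
    haveI : IsProbabilityMeasure μ := hμ.1
    have hwt : ∀ x ∈ S, μ {x} ≠ ⊤ := fun x _ => measure_ne_top μ _
    have hsumw : ∑ x ∈ S, (μ {x}).toReal = 1 := by
      rw [← ENNReal.toReal_sum hwt, (main μ hμ).1, ENNReal.toReal_one]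
    have hceq : ∑ x ∈ S, (μ {x}) ^ 2 = ENNReal.ofReal (∑ x ∈ S, ((μ {x}).toReal) ^ 2) := by
      rw [ENNReal.ofReal_sum_of_nonneg (fun x _ => by positivity)]
      refine Finset.sum_congr rfl fun x hx => ?_
      rw [ENNReal.ofReal_pow ENNReal.toReal_nonneg,
        ENNReal.ofReal_toReal (hwt x hx)]
    have hsq := sumsq S (fun x => (μ {x}).toReal) hS hsumw
    constructor
    · rw [hceq, hkinv]
      apply ENNReal.ofReal_le_ofReal
      rw [hsq]
      have hnn : 0 ≤ ∑ x ∈ S, ((μ {x}).toReal - 1 / S.card) ^ 2 :=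
        Finset.sum_nonneg fun x _ => by positivity
      linarith
    · intro heq x hx
      rw [hceq, hkinv, ENNReal.ofReal_eq_ofReal_iff
        (Finset.sum_nonneg fun y _ => by positivity) (by positivity)] at heq
      have h0 : ∑ y ∈ S, ((μ {y}).toReal - 1 / S.card) ^ 2 = 0 := by
        rw [hsq] at heq; linarith
      have hx0 : ((μ {x}).toReal - 1 / S.card) ^ 2 = 0 :=
        (Finset.sum_eq_zero_iff_of_nonneg fun y _ => by positivity).mp h0 x hx
      have hwx : (μ {x}).toReal = 1 / S.card := by
        have h3 := pow_eq_zero_iff (n := 2) (by norm_num) |>.mp hx0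
        linarith
      rw [hkinv, ← hwx, ENNReal.ofReal_toReal (hwt x hx)]
  -- the uniform measure
  set μ₀ : Measure (EuclideanSpace ℝ (Fin n)) := ((S.card : ℝ≥0∞))⁻¹ • ∑ x ∈ S, Measure.dirac x with hμ₀def
  have hμ₀dec : μ₀ = ∑ x ∈ S, ((S.card : ℝ≥0∞))⁻¹ • Measure.dirac x := Finset.smul_sum
  have hsum_inv : ∑ _x ∈ S, ((S.card : ℝ≥0∞))⁻¹ = 1 := by
    rw [Finset.sum_const, nsmul_eq_mul, ENNReal.mul_inv_cancel hkE0 hkEt]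
  have hμ₀prob : IsProbabilityMeasure μ₀ := by
    constructor
    rw [hμ₀dec, Measure.finset_sum_apply]
    simpa using hsum_inv
  have hμ₀compl : μ₀ ((↑S : Set (EuclideanSpace ℝ (Fin n)))ᶜ) = 0 := by
    rw [hμ₀dec, Measure.finset_sum_apply]
    refine Finset.sum_eq_zero fun x hx => ?_
    rw [Measure.smul_apply,
      Measure.dirac_apply' x S.finite_toSet.measurableSet.compl]
    simp [Set.indicator_apply, hx]
  have hμ₀mem : μ₀ ∈ Riesz.probOn (↑S : Set (EuclideanSpace ℝ (Fin n))) := ⟨hμ₀prob, hμ₀compl⟩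
  have hμ₀energy : Riesz.energyOf p μ₀ = T := by
    haveI : IsProbabilityMeasure μ₀ := hμ₀prob
    have hE := energy_atoms p S (fun _ => ((S.card : ℝ≥0∞))⁻¹) μ₀ hμ₀dec
    have hkey := key_identity S (fun _ => ((S.card : ℝ≥0∞))⁻¹) D K hsum_inv hK
    have hsumsq : ∑ _x ∈ S, (((S.card : ℝ≥0∞))⁻¹) ^ 2 = ((S.card : ℝ≥0∞))⁻¹ := by
      rw [Finset.sum_const, nsmul_eq_mul, sq, ← mul_assoc,
        ENNReal.mul_inv_cancel hkE0 hkEt, one_mul]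
    rw [hsumsq, ← hE] at hkey
    exact cancel_right hDkt (hkey.trans hTD.symm)
  -- the energy of S
  have hEsup : Riesz.energy p (↑S : Set (EuclideanSpace ℝ (Fin n))) = T := by
    rw [Riesz.energy, if_pos hp]
    apply le_antisymm
    · refine iSup₂_le fun μ hμ => ?_
      have hE := (main μ hμ).2
      have hb := (sqb μ hμ).1
      have h1 : Riesz.energyOf p μ = D - D * ∑ x ∈ S, (μ {x}) ^ 2 :=
        ENNReal.eq_sub_of_add_eq (ENNReal.mul_ne_top hDt (sqfin μ hμ)) hE
      have h2 : T = D - D * ((S.card : ℝ≥0∞))⁻¹ :=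
        ENNReal.eq_sub_of_add_eq hDkt hTD
      rw [h1, h2]
      exact tsub_le_tsub_left (mul_le_mul_right hb D) D
    · exact le_iSup₂_of_le μ₀ hμ₀mem (le_of_eq hμ₀energy.symm)
  constructor
  · -- capacity
    rw [Riesz.cap, if_neg hp.ne, hEsup, hTdef, hDdef,
      ENNReal.ofReal_rpow_of_pos hd, ← ENNReal.ofReal_mul (by positivity),
      ENNReal.toReal_ofReal (by positivity)]
    have hmul : (d ^ (-p) * c₀) ^ (-1 / p)
        = (d ^ (-p)) ^ (-1 / p) * c₀ ^ (-1 / p) :=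
      Real.mul_rpow (by positivity) hc₀.le
    have hdp : (d ^ (-p)) ^ (-1 / p) = d := by
      rw [← Real.rpow_mul hd.le]
      have h4 : -p * (-1 / p) = 1 := by
        field_simp
        exact div_self hp.ne
      rw [h4, Real.rpow_one]
    rw [hmul, hdp, mul_comm]
  · -- equilibrium measures
    intro μ
    constructor
    · rintro ⟨hμ, hEeq⟩
      rw [hEsup] at hEeq
      have hE := (main μ hμ).2
      rw [hEeq] at hE
      have h1 : D * ∑ x ∈ S, (μ {x}) ^ 2 = D * ((S.card : ℝ≥0∞))⁻¹ :=
        (ENNReal.add_right_inj hTt).mp (hE.trans hTD.symm)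
      have h2 : ∑ x ∈ S, (μ {x}) ^ 2 = ((S.card : ℝ≥0∞))⁻¹ :=
        mul_cancel_left hD0 hDt h1
      have h3 := (sqb μ hμ).2 h2
      haveI : IsProbabilityMeasure μ := hμ.1
      conv_lhs => rw [decompose S μ hμ.2]
      rw [hμ₀dec]
      exact Finset.sum_congr rfl fun x hx => by rw [h3 x hx]
    · rintro rfl
      exact ⟨hμ₀mem, by rw [hμ₀energy, hEsup]⟩
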